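/- Let f₀ : ℝ → ℝ be twice continuously differentiable with f₀'' compactly supported, and suppose there exist R > 0 and reals μ, ν such that f₀(y) = μ·y − ν for all y ≥ R and f₀(y) = −μ·y + ν for all y ≤ −R (i.e. f₀ is affine near infinity with coefficients odd at infinity). Then for every ρ > 0 and η ∈ ℝ the integration-by-parts identity ∫_ℝ √(ρ² + (η−y)²) · f₀''(y) dy = ρ² ∫_ℝ f₀(y) · (ρ² + (η−y)²)^{−3/2} dy holds, both integrals being finite. -/

import Mathlib

open MeasureTheory Filter Set Topology


-- derivative of g
lemma sqrt_deriv (ρ η : ℝ) (hρ : 0 < ρ) (y : ℝ) :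
    HasDerivAt (fun y : ℝ => Real.sqrt (ρ ^ 2 + (η - y) ^ 2))
      ((y - η) / Real.sqrt (ρ ^ 2 + (η - y) ^ 2)) y := by
  have hq : 0 < ρ ^ 2 + (η - y) ^ 2 := by positivity
  have h1 : HasDerivAt (fun y : ℝ => ρ ^ 2 + (η - y) ^ 2) (2 * (y - η)) y := by
    have : HasDerivAt (fun y : ℝ => η - y) (-1) y := by
      simpa using (hasDerivAt_id' y).const_sub η
    have := ((this.pow 2).const_add (ρ ^ 2))
    refine this.congr_deriv ?_; ring
  have := h1.sqrt hq.ne'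
  convert this using 1
  have hs : Real.sqrt (ρ ^ 2 + (η - y) ^ 2) ≠ 0 := (Real.sqrt_pos.mpr hq).ne'
  field_simp

lemma rpow_nth (q : ℝ) (hq : 0 < q) : q ^ (-(3:ℝ)/2) = 1 / (Real.sqrt q)^3 := by
  rw [Real.sqrt_eq_rpow, ← Real.rpow_natCast (q ^ ((1:ℝ)/2)) 3, ← Real.rpow_mul hq.le]
  rw [show (-(3:ℝ)/2) = -((1:ℝ)/2 * 3) by norm_num, Real.rpow_neg hq.le, one_div]
  norm_num

lemma g1_deriv (ρ η : ℝ) (hρ : 0 < ρ) (y : ℝ) :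
    HasDerivAt (fun y : ℝ => (y - η) / Real.sqrt (ρ ^ 2 + (η - y) ^ 2))
      (ρ ^ 2 * (ρ ^ 2 + (η - y) ^ 2) ^ (-(3:ℝ)/2)) y := by
  have hq : 0 < ρ ^ 2 + (η - y) ^ 2 := by positivity
  have hs : 0 < Real.sqrt (ρ ^ 2 + (η - y) ^ 2) := Real.sqrt_pos.mpr hq
  have hnum : HasDerivAt (fun y : ℝ => y - η) 1 y := by
    simpa using (hasDerivAt_id y).sub_const η
  have := hnum.div (sqrt_deriv ρ η hρ y) hs.ne'
  refine this.congr_deriv ?_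
  symm
  rw [rpow_nth _ hq]
  set s := Real.sqrt (ρ ^ 2 + (η - y) ^ 2) with hsdef
  have hsq : s ^ 2 = ρ ^ 2 + (η - y) ^ 2 := Real.sq_sqrt hq.le
  have h3 : s ^ 3 = s * s ^ 2 := by ring
  rw [h3, hsq]
  field_simp
  nlinarith [hsq, hs]

lemma lim_aff (ρ η a b : ℝ) (hρ : 0 < ρ) :
    Tendsto (fun A : ℝ => (a + b * A) / Real.sqrt (ρ ^ 2 + (η - A) ^ 2)) atTop (𝓝 b) := by
  have h0 : Tendsto (fun A : ℝ => a / A) atTop (𝓝 0) :=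
    tendsto_const_nhds.div_atTop tendsto_id
  have h0' : Tendsto (fun A : ℝ => η / A) atTop (𝓝 0) :=
    tendsto_const_nhds.div_atTop tendsto_id
  have h0'' : Tendsto (fun A : ℝ => ρ ^ 2 / A ^ 2) atTop (𝓝 0) :=
    tendsto_const_nhds.div_atTop (tendsto_pow_atTop (by norm_num))
  have hnum : Tendsto (fun A : ℝ => a / A + b) atTop (𝓝 (0 + b)) :=
    h0.add tendsto_const_nhds
  have hin : Tendsto (fun A : ℝ => ρ ^ 2 / A ^ 2 + (η / A - 1) ^ 2) atTop
      (𝓝 (0 + (0 - 1) ^ 2)) := by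
    exact h0''.add ((h0'.sub tendsto_const_nhds).pow 2)
  have hden : Tendsto (fun A : ℝ => Real.sqrt (ρ ^ 2 / A ^ 2 + (η / A - 1) ^ 2)) atTop
      (𝓝 1) := by
    have := (Real.continuous_sqrt.tendsto (0 + (0 - 1) ^ 2)).comp hin
    simpa [Function.comp_def] using this
  have hmain : Tendsto (fun A : ℝ => (a / A + b) /
      Real.sqrt (ρ ^ 2 / A ^ 2 + (η / A - 1) ^ 2)) atTop (𝓝 b) := by
    have := hnum.div hden one_ne_zero
    simpa [Pi.div_def] using this
  apply hmain.congr'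
  filter_upwards [eventually_gt_atTop 0] with A hA
  have hq : (0:ℝ) ≤ ρ ^ 2 + (η - A) ^ 2 := by positivity
  have key : Real.sqrt (ρ ^ 2 / A ^ 2 + (η / A - 1) ^ 2)
      = Real.sqrt (ρ ^ 2 + (η - A) ^ 2) / A := by
    rw [show ρ ^ 2 / A ^ 2 + (η / A - 1) ^ 2 = (ρ ^ 2 + (η - A) ^ 2) / A ^ 2 by
      field_simp]
    rw [Real.sqrt_div hq, Real.sqrt_sq hA.le]
  rw [key]
  have hs : Real.sqrt (ρ ^ 2 + (η - A) ^ 2) ≠ 0 := by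
    have : 0 < ρ ^ 2 + (η - A) ^ 2 := by positivity
    exact (Real.sqrt_pos.mpr this).ne'
  rw [div_div_eq_mul_div, div_eq_div_iff (by positivity) hs]
  field_simp

lemma integrableOn_neg_tail {B : ℝ} (hB : 0 < B) :
    IntegrableOn (fun y : ℝ => (-y) ^ (-(2:ℝ))) (Iio (-B)) := by
  have h := integrableOn_Ioi_rpow_of_lt (show (-2:ℝ) < -1 by norm_num) hB
  have h2 : Integrable ((Ioi B).indicator fun y : ℝ => y ^ (-(2:ℝ))) :=
    (integrable_indicator_iff measurableSet_Ioi).mpr h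
  have h3 := h2.comp_neg
  have h4 : (fun y : ℝ => (Ioi B).indicator (fun z : ℝ => z ^ (-(2:ℝ))) (-y))
      = (Iio (-B)).indicator (fun y : ℝ => (-y) ^ (-(2:ℝ))) := by
    ext y
    by_cases hy : y < -B
    · have : -y ∈ Ioi B := by simp [mem_Ioi]; linarith
      simp [indicator_of_mem this, indicator_of_mem (mem_Iio.mpr hy)]
    · have : -y ∉ Ioi B := by simp [mem_Ioi]; linarith
      simp [indicator_of_notMem this, indicator_of_notMem (fun h : y ∈ Iio (-B) => hy h)]
  exact (integrable_indicator_iff measurableSet_Iio).mp (h4 ▸ h3)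

set_option maxHeartbeats 1000000 in
lemma integrable_poisson_kernel (f₀ : ℝ → ℝ) (hc : Continuous f₀) {R μ ν : ℝ} (hR : 0 < R)
    (h1 : ∀ y : ℝ, R ≤ y → f₀ y = μ * y - ν) (h2 : ∀ y : ℝ, y ≤ -R → f₀ y = -(μ * y) + ν)
    (ρ η : ℝ) (hρ : 0 < ρ) :
    Integrable (fun y : ℝ => f₀ y * (ρ ^ 2 + (η - y) ^ 2) ^ (-(3:ℝ)/2)) := by
  set F : ℝ → ℝ := fun y : ℝ => f₀ y * (ρ ^ 2 + (η - y) ^ 2) ^ (-(3:ℝ)/2) with hF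
  set C : ℝ := 8 * (|μ| + |ν|) with hC
  set B : ℝ := max R (2 * |η| + 1) with hB
  have hB0 : 0 < B := lt_max_of_lt_left hR
  have hBR : R ≤ B := le_max_left _ _
  have hBη : 2 * |η| + 1 ≤ B := le_max_right _ _
  have hqc : Continuous fun y : ℝ => ρ ^ 2 + (η - y) ^ 2 :=
    continuous_const.add ((continuous_const.sub continuous_id).pow 2)
  have hFc : Continuous F := by
    apply hc.mul
    apply hqc.rpow_const
    intro x
    left
    positivity
  -- pointwise bound on tails
  have hbound : ∀ y : ℝ, B ≤ |y| → ‖F y‖ ≤ C * (|y| ^ 2)⁻¹ := by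
    intro y hy
    have hy1 : (1:ℝ) ≤ |y| := le_trans (by linarith [abs_nonneg η, hBη]) hy
    have hy0 : (0:ℝ) < |y| := by linarith
    have hηy : 2 * |η| ≤ |y| := by linarith [hBη, hy]
    have habs : |y| / 2 ≤ |η - y| := by
      have := abs_sub_abs_le_abs_sub y η
      have : |y - η| = |η - y| := abs_sub_comm y η
      cases abs_cases (η - y) with
      | inl h => cases abs_cases y with
        | _ hy' => nlinarith [abs_nonneg η, abs_le.mp (le_refl |η|), neg_abs_le η, le_abs_self η, neg_abs_le y, le_abs_self y]
      | inr h => nlinarith [neg_abs_le η, le_abs_self η, neg_abs_le y, le_abs_self y]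
    have hq : (0:ℝ) < ρ ^ 2 + (η - y) ^ 2 := by positivity
    have hqge : (|y| / 2) ^ 2 ≤ ρ ^ 2 + (η - y) ^ 2 := by
      nlinarith [sq_nonneg ρ, sq_abs (η - y), abs_nonneg (η - y)]
    -- rpow comparisons
    have h32 : ((|y| / 2) ^ 2 : ℝ) ^ ((3:ℝ)/2) = (|y| / 2) ^ 3 := by
      rw [← Real.rpow_natCast (|y| / 2) 2, ← Real.rpow_mul (by positivity)]
      norm_num
    have hmono : (|y| / 2) ^ 3 ≤ (ρ ^ 2 + (η - y) ^ 2) ^ ((3:ℝ)/2) := by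
      rw [← h32]
      exact Real.rpow_le_rpow (by positivity) hqge (by norm_num)
    have hneg : (ρ ^ 2 + (η - y) ^ 2) ^ (-(3:ℝ)/2) ≤ ((|y| / 2) ^ 3)⁻¹ := by
      rw [neg_div, Real.rpow_neg hq.le]
      exact inv_anti₀ (by positivity) hmono
    have hf : |f₀ y| ≤ (|μ| + |ν|) * |y| := by
      rcases le_or_gt B y with hcase | hcase
      · rw [h1 y (le_trans hBR hcase)]
        have : |y| = y := abs_of_pos (lt_of_lt_of_le hB0 hcase)
        calc |μ * y - ν| ≤ |μ * y| + |ν| := abs_sub _ _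
          _ = |μ| * |y| + |ν| := by rw [abs_mul, this]
          _ ≤ |μ| * |y| + |ν| * |y| := by nlinarith [abs_nonneg ν]
          _ = (|μ| + |ν|) * |y| := by ring
      · have hyneg : y ≤ -R := by
          rcases abs_cases y with ⟨h, _⟩ | ⟨h, _⟩
          · linarith [hy, hcase]
          · linarith [hy, hBR]
        rw [h2 y hyneg]
        calc |-(μ * y) + ν| ≤ |μ * y| + |ν| := by
              rw [← abs_neg (μ * y)] at *
              exact abs_add_le _ _
          _ = |μ| * |y| + |ν| := by rw [abs_mul]
          _ ≤ |μ| * |y| + |ν| * |y| := by nlinarith [abs_nonneg ν]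
          _ = (|μ| + |ν|) * |y| := by ring
    have hrnn : (0:ℝ) ≤ (ρ ^ 2 + (η - y) ^ 2) ^ (-(3:ℝ)/2) := Real.rpow_nonneg hq.le _
    have : ‖F y‖ = |f₀ y| * (ρ ^ 2 + (η - y) ^ 2) ^ (-(3:ℝ)/2) := by
      rw [hF]
      simp only [Real.norm_eq_abs, abs_mul, abs_of_nonneg hrnn]
    rw [this]
    calc |f₀ y| * (ρ ^ 2 + (η - y) ^ 2) ^ (-(3:ℝ)/2)
        ≤ ((|μ| + |ν|) * |y|) * ((|y| / 2) ^ 3)⁻¹ := by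
          apply mul_le_mul hf hneg hrnn (by positivity)
      _ = C * (|y| ^ 2)⁻¹ := by
          have h8 : ((|y| / 2) ^ 3)⁻¹ = 8 / |y| ^ 3 := by
            rw [div_pow, inv_div]
            norm_num
          rw [h8, hC]
          have h2 : (|y|:ℝ) ^ 2 ≠ 0 := by positivity
          field_simp [hy0.ne', -sq_abs]
  -- integrable on the right tail
  have hIoi : IntegrableOn F (Ioi B) := by
    apply Integrable.mono' (g := fun y : ℝ => C * y ^ (-(2:ℝ)))
    · exact (integrableOn_Ioi_rpow_of_lt (by norm_num) hB0).const_mul C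
    · exact hFc.aestronglyMeasurable.restrict
    · filter_upwards [ae_restrict_mem measurableSet_Ioi] with y hy
      have hy0 : 0 < y := lt_trans hB0 hy
      have := hbound y (by rw [abs_of_pos hy0]; exact le_of_lt hy)
      rw [abs_of_pos hy0] at this
      convert this using 2
      rw [Real.rpow_neg hy0.le]
      norm_num
  -- integrable on the left tail
  have hIio : IntegrableOn F (Iio (-B)) := by
    apply Integrable.mono' (g := fun y : ℝ => C * (-y) ^ (-(2:ℝ)))
    · exact (integrableOn_neg_tail hB0).const_mul C
    · exact hFc.aestronglyMeasurable.restrict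
    · filter_upwards [ae_restrict_mem measurableSet_Iio] with y hy
      have hy0 : y < 0 := lt_trans hy (by linarith)
      have habs : |y| = -y := abs_of_neg hy0
      have := hbound y (by rw [habs]; linarith [mem_Iio.mp hy])
      rw [habs] at this
      convert this using 2
      rw [Real.rpow_neg (by linarith : (0:ℝ) ≤ -y)]
      norm_num
  -- integrable on the middle
  have hIcc : IntegrableOn F (Icc (-B) B) := hFc.integrableOn_Icc
  rw [← integrableOn_univ]
  have hcover : (univ : Set ℝ) ⊆ Iio (-B) ∪ (Icc (-B) B ∪ Ioi B) := by
    intro y _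
    rcases lt_or_ge y (-B) with h | h
    · exact Or.inl h
    · rcases le_or_gt y B with h' | h'
      · exact Or.inr (Or.inl ⟨h, h'⟩)
      · exact Or.inr (Or.inr h')
  exact ((hIio.union (hIcc.union hIoi)).mono_set hcover)

set_option maxHeartbeats 1000000

/-- Integration by parts identity converting the superposition of basic
eigenfunctions against f₀'' into the Poisson formula with boundary data f₀,
for f₀ affine near infinity with coefficients odd at infinity. -/
theorem integration_by_parts_poisson (f₀ : ℝ → ℝ) (hf : ContDiff ℝ 2 f₀)
    (hsupp : HasCompactSupport (deriv (deriv f₀)))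
    (haff : ∃ R : ℝ, 0 < R ∧ ∃ μ ν : ℝ,
      (∀ y : ℝ, R ≤ y → f₀ y = μ * y - ν) ∧
      (∀ y : ℝ, y ≤ -R → f₀ y = -(μ * y) + ν)) :
    ∀ ρ η : ℝ, 0 < ρ →
      Integrable (fun y : ℝ => Real.sqrt (ρ ^ 2 + (η - y) ^ 2) * deriv (deriv f₀) y) ∧
      Integrable (fun y : ℝ => f₀ y * (ρ ^ 2 + (η - y) ^ 2) ^ (-(3 : ℝ) / 2)) ∧
      (∫ y : ℝ, Real.sqrt (ρ ^ 2 + (η - y) ^ 2) * deriv (deriv f₀) y)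
        = ρ ^ 2 * ∫ y : ℝ, f₀ y * (ρ ^ 2 + (η - y) ^ 2) ^ (-(3 : ℝ) / 2) := by
  obtain ⟨R, hR, μ, ν, h1, h2⟩ := haff
  intro ρ η hρ
  -- basic regularity facts
  have hf2 : ContDiff ℝ ((1 : WithTop ℕ∞) + 1) f₀ := by
    convert hf using 2
    norm_num
  have hsplit := contDiff_succ_iff_deriv.mp hf2
  have hf₀d : Differentiable ℝ f₀ := hsplit.1
  have hf'c : ContDiff ℝ 1 (deriv f₀) := hsplit.2.2
  have hf'd : Differentiable ℝ (deriv f₀) := hf'c.differentiable one_ne_zero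
  have hf''c : Continuous (deriv (deriv f₀)) := hf'c.continuous_deriv le_rfl
  have hqc : Continuous fun y : ℝ => ρ ^ 2 + (η - y) ^ 2 :=
    continuous_const.add ((continuous_const.sub continuous_id).pow 2)
  have hqpos : ∀ y : ℝ, 0 < ρ ^ 2 + (η - y) ^ 2 := fun y => by positivity
  have hgc : Continuous fun y : ℝ => Real.sqrt (ρ ^ 2 + (η - y) ^ 2) :=
    Real.continuous_sqrt.comp hqc
  have hgpos : ∀ y : ℝ, 0 < Real.sqrt (ρ ^ 2 + (η - y) ^ 2) :=
    fun y => Real.sqrt_pos.mpr (hqpos y)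
  have hg1c : Continuous fun y : ℝ => (y - η) / Real.sqrt (ρ ^ 2 + (η - y) ^ 2) :=
    (continuous_id.sub continuous_const).div hgc fun y => (hgpos y).ne'
  -- derivative values on tails
  have hder_pos : ∀ y : ℝ, R < y → deriv f₀ y = μ := by
    intro y hy
    have hev : f₀ =ᶠ[nhds y] fun z => μ * z - ν :=
      eventually_of_mem (Ioi_mem_nhds hy) fun z hz => h1 z (le_of_lt hz)
    have hd : HasDerivAt (fun z : ℝ => μ * z - ν) μ y := by
      simpa using ((hasDerivAt_id y).const_mul μ).sub_const ν
    rw [hev.deriv_eq]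
    exact hd.deriv
  have hder_neg : ∀ y : ℝ, y < -R → deriv f₀ y = -μ := by
    intro y hy
    have hev : f₀ =ᶠ[nhds y] fun z => -(μ * z) + ν :=
      eventually_of_mem (Iio_mem_nhds hy) fun z hz => h2 z (le_of_lt hz)
    have hd : HasDerivAt (fun z : ℝ => -(μ * z) + ν) (-μ) y := by
      simpa using (((hasDerivAt_id y).const_mul μ).neg).add_const ν
    rw [hev.deriv_eq]
    exact hd.deriv
  have hdd_pos : ∀ y : ℝ, R < y → deriv (deriv f₀) y = 0 := by
    intro y hy
    have hev : deriv f₀ =ᶠ[nhds y] fun _ => μ :=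
      eventually_of_mem (Ioi_mem_nhds hy) fun z hz => hder_pos z hz
    rw [hev.deriv_eq, deriv_const]
  have hdd_neg : ∀ y : ℝ, y < -R → deriv (deriv f₀) y = 0 := by
    intro y hy
    have hev : deriv f₀ =ᶠ[nhds y] fun _ => -μ :=
      eventually_of_mem (Iio_mem_nhds hy) fun z hz => hder_neg z hz
    rw [hev.deriv_eq, deriv_const]
  -- first integrability
  have hI1 : Integrable (fun y : ℝ => Real.sqrt (ρ ^ 2 + (η - y) ^ 2) * deriv (deriv f₀) y) := by
    apply Continuous.integrable_of_hasCompactSupport (hgc.mul hf''c)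
    exact hsupp.mul_left
  -- second integrability
  have hI2 : Integrable (fun y : ℝ => f₀ y * (ρ ^ 2 + (η - y) ^ 2) ^ (-(3 : ℝ) / 2)) :=
    integrable_poisson_kernel f₀ hf.continuous hR h1 h2 ρ η hρ
  refine ⟨hI1, hI2, ?_⟩
  -- the integrand for the Poisson side, with the ρ² factor
  have hI3 : Integrable (fun y : ℝ =>
      (ρ ^ 2 * (ρ ^ 2 + (η - y) ^ 2) ^ (-(3 : ℝ) / 2)) * f₀ y) := by
    apply (hI2.const_mul (ρ ^ 2)).congr
    filter_upwards with y
    ring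
  -- interval integration by parts
  have hIBP : ∀ A : ℝ, (∫ y in (-A)..A,
        Real.sqrt (ρ ^ 2 + (η - y) ^ 2) * deriv (deriv f₀) y)
      = (Real.sqrt (ρ ^ 2 + (η - A) ^ 2) * deriv f₀ A
          - Real.sqrt (ρ ^ 2 + (η - (-A)) ^ 2) * deriv f₀ (-A)
          - ((A - η) / Real.sqrt (ρ ^ 2 + (η - A) ^ 2) * f₀ A
            - ((-A) - η) / Real.sqrt (ρ ^ 2 + (η - (-A)) ^ 2) * f₀ (-A)))
        + ∫ y in (-A)..A, (ρ ^ 2 * (ρ ^ 2 + (η - y) ^ 2) ^ (-(3 : ℝ) / 2)) * f₀ y := by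
    intro A
    have ibp1 := intervalIntegral.integral_mul_deriv_eq_deriv_mul
      (u := fun y : ℝ => Real.sqrt (ρ ^ 2 + (η - y) ^ 2))
      (u' := fun y : ℝ => (y - η) / Real.sqrt (ρ ^ 2 + (η - y) ^ 2))
      (v := deriv f₀) (v' := deriv (deriv f₀)) (a := -A) (b := A)
      (fun x _ => sqrt_deriv ρ η hρ x)
      (fun x _ => (hf'd x).hasDerivAt)
      (hg1c.intervalIntegrable _ _)
      (hf''c.intervalIntegrable _ _)
    have ibp2 := intervalIntegral.integral_mul_deriv_eq_deriv_mul
      (u := fun y : ℝ => (y - η) / Real.sqrt (ρ ^ 2 + (η - y) ^ 2))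
      (u' := fun y : ℝ => ρ ^ 2 * (ρ ^ 2 + (η - y) ^ 2) ^ (-(3 : ℝ) / 2))
      (v := f₀) (v' := deriv f₀) (a := -A) (b := A)
      (fun x _ => g1_deriv ρ η hρ x)
      (fun x _ => (hf₀d x).hasDerivAt)
      ((continuous_const.mul (hqc.rpow_const fun x => Or.inl (hqpos x).ne')).intervalIntegrable _ _)
      ((hf'c.continuous).intervalIntegrable _ _)
    rw [ibp1, ibp2]
    ring
  -- the boundary term tends to zero
  have hBlim : Tendsto (fun A : ℝ =>
      Real.sqrt (ρ ^ 2 + (η - A) ^ 2) * deriv f₀ A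
        - Real.sqrt (ρ ^ 2 + (η - (-A)) ^ 2) * deriv f₀ (-A)
        - ((A - η) / Real.sqrt (ρ ^ 2 + (η - A) ^ 2) * f₀ A
          - ((-A) - η) / Real.sqrt (ρ ^ 2 + (η - (-A)) ^ 2) * f₀ (-A))) atTop (𝓝 0) := by
    have t1 := lim_aff ρ η (μ * (ρ ^ 2 + η ^ 2)) (-(μ * η)) hρ
    have t2 := lim_aff ρ η (-(ν * η)) ν hρ
    have t3 := lim_aff ρ (-η) (μ * (ρ ^ 2 + η ^ 2)) (μ * η) hρ
    have t4 := lim_aff ρ (-η) (-(ν * η)) (-ν) hρ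
    have hsum := (t1.add t2).add (t3.add t4)
    rw [show (-(μ * η) + ν + (μ * η + -ν) : ℝ) = 0 from by ring] at hsum
    apply hsum.congr'
    filter_upwards [eventually_gt_atTop R, eventually_gt_atTop 0] with A hA hA0
    rw [h1 A hA.le, h2 (-A) (by linarith), hder_pos A hA, hder_neg (-A) (by linarith)]
    have hga : Real.sqrt (ρ ^ 2 + (η - A) ^ 2) ≠ 0 := (hgpos A).ne'
    have hgma : Real.sqrt (ρ ^ 2 + (η - (-A)) ^ 2) ≠ 0 := (hgpos (-A)).ne'
    have hga2 : Real.sqrt (ρ ^ 2 + (η - A) ^ 2) ^ 2 = ρ ^ 2 + (η - A) ^ 2 :=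
      Real.sq_sqrt (hqpos A).le
    have hgma2 : Real.sqrt (ρ ^ 2 + (η - (-A)) ^ 2) ^ 2 = ρ ^ 2 + (η - (-A)) ^ 2 :=
      Real.sq_sqrt (hqpos (-A)).le
    have hsym : Real.sqrt (ρ ^ 2 + (-η - A) ^ 2) = Real.sqrt (ρ ^ 2 + (η - (-A)) ^ 2) := by
      rw [show (-η - A) ^ 2 = (η - (-A)) ^ 2 by ring]
    rw [hsym]
    set sA := Real.sqrt (ρ ^ 2 + (η - A) ^ 2) with hsA
    set sB := Real.sqrt (ρ ^ 2 + (η - (-A)) ^ 2) with hsB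
    field_simp
    linear_combination (-(μ * sB)) * hga2 + (-(μ * sA)) * hgma2
  -- convergence of the truncated Poisson integrals
  have hInt_tendsto : Tendsto (fun A : ℝ => ∫ y in (-A)..A,
      (ρ ^ 2 * (ρ ^ 2 + (η - y) ^ 2) ^ (-(3 : ℝ) / 2)) * f₀ y) atTop
      (𝓝 (∫ y : ℝ, (ρ ^ 2 * (ρ ^ 2 + (η - y) ^ 2) ^ (-(3 : ℝ) / 2)) * f₀ y)) :=
    intervalIntegral_tendsto_integral hI3 tendsto_neg_atTop_atBot tendsto_id
  -- the truncated LHS converges to the sum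
  have hΦ : Tendsto (fun A : ℝ => ∫ y in (-A)..A,
      Real.sqrt (ρ ^ 2 + (η - y) ^ 2) * deriv (deriv f₀) y) atTop
      (𝓝 (0 + ∫ y : ℝ, (ρ ^ 2 * (ρ ^ 2 + (η - y) ^ 2) ^ (-(3 : ℝ) / 2)) * f₀ y)) := by
    apply (hBlim.add hInt_tendsto).congr'
    filter_upwards with A using (hIBP A).symm
  -- the truncated LHS is eventually constant
  have hΦ2 : Tendsto (fun A : ℝ => ∫ y in (-A)..A,
      Real.sqrt (ρ ^ 2 + (η - y) ^ 2) * deriv (deriv f₀) y) atTop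
      (𝓝 (∫ y : ℝ, Real.sqrt (ρ ^ 2 + (η - y) ^ 2) * deriv (deriv f₀) y)) := by
    apply tendsto_const_nhds.congr'
    filter_upwards [eventually_gt_atTop R] with A hA
    symm
    apply intervalIntegral.integral_eq_integral_of_support_subset
    intro y hy
    have hy' : deriv (deriv f₀) y ≠ 0 := by
      intro h0
      apply hy
      simp [h0]
    constructor
    · by_contra hc
      exact hy' (hdd_neg y (by push_neg at hc; linarith))
    · by_contra hc
      exact hy' (hdd_pos y (by push_neg at hc; linarith))
  have hkey := tendsto_nhds_unique hΦ2 hΦ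
  rw [hkey, zero_add]
  rw [show (fun y : ℝ => (ρ ^ 2 * (ρ ^ 2 + (η - y) ^ 2) ^ (-(3 : ℝ) / 2)) * f₀ y)
      = fun y : ℝ => ρ ^ 2 * (f₀ y * (ρ ^ 2 + (η - y) ^ 2) ^ (-(3 : ℝ) / 2)) from
    funext fun y => by ring]
  exact integral_const_mul _ _
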